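/- Let N ≥ 1 be an integer, ρ ∈ [0,1], and f, g real numbers. Let P = I − Q_ρ, let A = [[0,1],[0,0]] and K = [[0,0],[f,g]], and set M = I ⊗ A + P ⊗ K. Then every eigenvalue of M has strictly negative real part if and only if f < 0 and g < 0. -/

import Mathlib

open Kronecker

/-- The `N × N` complex tridiagonal matrix with superdiagonal entries `ρ` and
subdiagonal entries `1 - ρ`. -/
def Qmat (N : ℕ) (ρ : ℝ) : Matrix (Fin N) (Fin N) ℂ :=
  Matrix.of fun i j =>
    if (j : ℕ) = (i : ℕ) + 1 then (ρ : ℂ)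
    else if (i : ℕ) = (j : ℕ) + 1 then ((1 - ρ : ℝ) : ℂ) else 0

/-- The reduced graph Laplacian `P = I - Q_ρ`. -/
def Pmat (N : ℕ) (ρ : ℝ) : Matrix (Fin N) (Fin N) ℂ :=
  1 - Qmat N ρ


lemma mem_spec_iff {n : Type*} [Fintype n] [DecidableEq n] (M : Matrix n n ℂ) (ν : ℂ) :
    ν ∈ spectrum ℂ M ↔ ∃ v, v ≠ 0 ∧ M.mulVec v = ν • v := by
  rw [spectrum.mem_iff, Matrix.isUnit_iff_isUnit_det, isUnit_iff_ne_zero, not_ne_iff,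
    ← Matrix.exists_mulVec_eq_zero_iff]
  have key : ∀ v, (algebraMap ℂ (Matrix n n ℂ) ν - M).mulVec v = ν • v - M.mulVec v := by
    intro v
    rw [Matrix.sub_mulVec, Matrix.algebraMap_eq_diagonal]
    congr 1
    ext i
    simp [Matrix.mulVec_diagonal]
  constructor
  · rintro ⟨v, hv, h⟩
    exact ⟨v, hv, (sub_eq_zero.mp ((key v) ▸ h)).symm⟩
  · rintro ⟨v, hv, h⟩
    exact ⟨v, hv, by rw [key v, h, sub_self]⟩

lemma spec_nonempty {N : ℕ} (hN : 1 ≤ N) (M : Matrix (Fin N) (Fin N) ℂ) :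
    (spectrum ℂ M).Nonempty := by
  haveI : NeZero N := ⟨by omega⟩
  obtain ⟨c, hc⟩ := Module.End.exists_eigenvalue (Matrix.mulVecLin M)
  obtain ⟨v, hv⟩ := hc.exists_hasEigenvector
  exact ⟨c, (mem_spec_iff M c).mpr ⟨v, hv.2, by simpa [Matrix.mulVecLin_apply] using hv.apply_eq_smul⟩⟩

lemma Q_mulVec (N : ℕ) (ρ : ℝ) (u : Fin N → ℂ) (i : Fin N) :
    (Qmat N ρ).mulVec u i =
      (ρ : ℂ) * (if h : (i : ℕ) + 1 < N then u ⟨(i : ℕ) + 1, h⟩ else 0)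
      + ((1 - ρ : ℝ) : ℂ) * (if h : 0 < (i : ℕ) then u ⟨(i : ℕ) - 1, by omega⟩ else 0) := by
  have key : ∀ j : Fin N, Qmat N ρ i j * u j
      = (ρ : ℂ) * (if (j : ℕ) = (i : ℕ) + 1 then u j else 0)
        + ((1 - ρ : ℝ) : ℂ) * (if (i : ℕ) = (j : ℕ) + 1 then u j else 0) := by
    intro j
    simp only [Qmat, Matrix.of_apply]
    by_cases h1 : (j : ℕ) = (i : ℕ) + 1
    · rw [if_pos h1, if_pos h1, if_neg (show ¬((i : ℕ) = (j : ℕ) + 1) by omega)]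
      ring
    · rw [if_neg h1, if_neg h1]
      by_cases h2 : (i : ℕ) = (j : ℕ) + 1
      · rw [if_pos h2, if_pos h2]; ring
      · rw [if_neg h2, if_neg h2]; ring
  rw [Matrix.mulVec, dotProduct]
  calc ∑ j : Fin N, Qmat N ρ i j * u j
      = ∑ j : Fin N, ((ρ : ℂ) * (if (j : ℕ) = (i : ℕ) + 1 then u j else 0)
        + ((1 - ρ : ℝ) : ℂ) * (if (i : ℕ) = (j : ℕ) + 1 then u j else 0)) :=
        Finset.sum_congr rfl (fun j _ => key j)
    _ = (ρ : ℂ) * (∑ j : Fin N, if (j : ℕ) = (i : ℕ) + 1 then u j else 0)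
        + ((1 - ρ : ℝ) : ℂ) * (∑ j : Fin N, if (i : ℕ) = (j : ℕ) + 1 then u j else 0) := by
        rw [Finset.sum_add_distrib, Finset.mul_sum, Finset.mul_sum]
    _ = _ := by
        congr 1
        · congr 1
          by_cases h : (i : ℕ) + 1 < N
          · rw [dif_pos h, Finset.sum_eq_single (⟨(i : ℕ) + 1, h⟩ : Fin N)]
            · simp
            · intro j _ hj
              exact if_neg (fun hc => hj (Fin.ext hc))
            · simp
          · rw [dif_neg h, Finset.sum_eq_zero]
            intro j _
            exact if_neg (fun hc => h (by have := j.isLt; omega))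
        · congr 1
          by_cases h : 0 < (i : ℕ)
          · rw [dif_pos h, Finset.sum_eq_single (⟨(i : ℕ) - 1, by omega⟩ : Fin N)]
            · rw [if_pos (by simp; omega)]
            · intro j _ hj
              exact if_neg (fun hc => hj (Fin.ext (show (j : ℕ) = (i : ℕ) - 1 by omega)))
            · simp
          · rw [dif_neg h, Finset.sum_eq_zero]
            intro j _
            exact if_neg (by omega)


lemma Q_conj (N : ℕ) (ρ : ℝ) (i j : Fin N) :
    (starRingEnd ℂ) (Qmat N ρ i j) = Qmat N ρ i j := by
  simp only [Qmat, Matrix.of_apply]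
  split_ifs <;> simp [Complex.conj_ofReal]

lemma Q_sym (N : ℕ) (ρ : ℝ) (hρ1 : ρ < 1) (i j : Fin N) :
    (((ρ / (1 - ρ)) ^ (i : ℕ) : ℝ) : ℂ) * Qmat N ρ i j
      = (((ρ / (1 - ρ)) ^ (j : ℕ) : ℝ) : ℂ) * Qmat N ρ j i := by
  have h1 : (1 - ρ) ≠ 0 := by linarith
  have key : ∀ n : ℕ, (ρ / (1 - ρ)) ^ (n + 1) * (1 - ρ) = (ρ / (1 - ρ)) ^ n * ρ := by
    intro n
    rw [pow_succ, mul_assoc, div_mul_cancel₀ _ h1]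
  simp only [Qmat, Matrix.of_apply]
  by_cases hc : (j : ℕ) = (i : ℕ) + 1
  · have h2 : ¬((i : ℕ) = (j : ℕ) + 1) := by omega
    rw [if_pos hc, if_neg h2, if_pos hc, hc]
    exact_mod_cast (key (i : ℕ)).symm
  · by_cases hc2 : (i : ℕ) = (j : ℕ) + 1
    · rw [if_neg hc, if_pos hc2, if_pos hc2, hc2]
      exact_mod_cast key (j : ℕ)
    · rw [if_neg hc, if_neg hc2, if_neg hc2, if_neg hc]
      simp

lemma eig_im_zero (N : ℕ) (ρ : ℝ) (hρ0 : 0 < ρ) (hρ1 : ρ < 1) (μ : ℂ) (u : Fin N → ℂ)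
    (hu : u ≠ 0) (hQu : (Qmat N ρ).mulVec u = μ • u) : μ.im = 0 := by
  set c : Fin N → ℝ := fun i => (ρ / (1 - ρ)) ^ (i : ℕ) with hc
  have hcpos : ∀ i, 0 < c i := fun i => pow_pos (div_pos hρ0 (by linarith)) _
  set T : ℝ := ∑ i, c i * Complex.normSq (u i) with hT
  have hTpos : 0 < T := by
    obtain ⟨i0, hi0⟩ := Function.ne_iff.mp hu
    apply Finset.sum_pos' (fun i _ => mul_nonneg (hcpos i).le (Complex.normSq_nonneg _))
    exact ⟨i0, Finset.mem_univ _, mul_pos (hcpos i0) (Complex.normSq_pos.mpr (by simpa using hi0))⟩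
  set S : ℂ := ∑ i, (c i : ℂ) * (starRingEnd ℂ) (u i) * ((Qmat N ρ).mulVec u i) with hS
  have hS1 : S = μ * (T : ℂ) := by
    rw [hS, hT]
    push_cast
    rw [Finset.mul_sum]
    apply Finset.sum_congr rfl
    intro i _
    rw [hQu]
    simp only [Pi.smul_apply, smul_eq_mul]
    rw [← Complex.mul_conj]
    ring
  have expand : S = ∑ i, ∑ j, (c i : ℂ) * (starRingEnd ℂ) (u i) * (Qmat N ρ i j * u j) := by
    rw [hS]
    apply Finset.sum_congr rfl
    intro i _
    rw [Matrix.mulVec, dotProduct, Finset.mul_sum]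
  have hswap : (starRingEnd ℂ) S = S := by
    conv_lhs => rw [expand]
    rw [map_sum]
    simp only [map_sum]
    have step1 : ∀ i j : Fin N, (starRingEnd ℂ) ((c i : ℂ) * (starRingEnd ℂ) (u i) * (Qmat N ρ i j * u j))
        = ((c j : ℂ) * Qmat N ρ j i) * (u i * (starRingEnd ℂ) (u j)) := by
      intro i j
      rw [map_mul, map_mul, map_mul, Complex.conj_conj, Q_conj, Complex.conj_ofReal]
      linear_combination (u i * (starRingEnd ℂ) (u j)) * (Q_sym N ρ hρ1 i j)
    calc ∑ i, ∑ j, (starRingEnd ℂ) ((c i : ℂ) * (starRingEnd ℂ) (u i) * (Qmat N ρ i j * u j))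
        = ∑ i, ∑ j, ((c j : ℂ) * Qmat N ρ j i) * (u i * (starRingEnd ℂ) (u j)) := by
          exact Finset.sum_congr rfl fun i _ => Finset.sum_congr rfl fun j _ => step1 i j
      _ = ∑ j, ∑ i, ((c j : ℂ) * Qmat N ρ j i) * (u i * (starRingEnd ℂ) (u j)) :=
          Finset.sum_comm
      _ = ∑ i, ∑ j, (c i : ℂ) * (starRingEnd ℂ) (u i) * (Qmat N ρ i j * u j) := by
          apply Finset.sum_congr rfl
          intro i _
          apply Finset.sum_congr rfl
          intro j _
          ring
      _ = S := expand.symm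
  have him : μ.im * T = 0 := by
    have h1 := congrArg Complex.im hswap
    rw [hS1] at h1
    simp only [Complex.conj_im, Complex.mul_im, Complex.ofReal_re, Complex.ofReal_im,
      mul_zero, add_zero] at h1
    linarith
  exact by
    rcases mul_eq_zero.mp him with h | h
    · exact h
    · exact absurd h hTpos.ne'

lemma eig_re_lt_one (N : ℕ) (ρ : ℝ) (hρ0 : 0 < ρ) (hρ1 : ρ < 1) (x : ℝ) (u : Fin N → ℂ)
    (hu : u ≠ 0) (hQu : (Qmat N ρ).mulVec u = (x : ℂ) • u) : x < 1 := by
  by_contra hx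
  push_neg at hx
  obtain ⟨i0, hi0⟩ := Function.ne_iff.mp hu
  have hi0' : u i0 ≠ 0 := by simpa using hi0
  obtain ⟨imax, _, hmax⟩ := Finset.exists_max_image Finset.univ
    (fun i => ‖u i‖) ⟨i0, Finset.mem_univ _⟩
  set m : ℝ := ‖u imax‖ with hm
  have hmpos : 0 < m := lt_of_lt_of_le (by simpa using hi0')
    (hmax i0 (Finset.mem_univ _))
  have hmle : ∀ i, ‖u i‖ ≤ m := fun i => hmax i (Finset.mem_univ _)
  -- the main local inequality at an index of maximal modulus
  have local_ineq : ∀ i : Fin N, ‖u i‖ = m →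
      x * m ≤ ρ * m + (1 - ρ) *
        (if h : 0 < (i : ℕ) then ‖u ⟨(i : ℕ) - 1, by omega⟩‖ else 0) := by
    intro i hi
    have heq := (congrFun hQu i).symm.trans (Q_mulVec N ρ u i)
    -- heq : (x • u) i = ρ * A + (1-ρ) * B
    have habs : x * m = ‖(ρ : ℂ) * (if h : (i : ℕ) + 1 < N then u ⟨(i : ℕ) + 1, h⟩ else 0)
        + ((1 - ρ : ℝ) : ℂ) * (if h : 0 < (i : ℕ) then u ⟨(i : ℕ) - 1, by omega⟩ else 0)‖ := by
      rw [← heq]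
      simp only [Pi.smul_apply, smul_eq_mul]
      rw [norm_mul, Complex.norm_real, Real.norm_eq_abs, abs_of_nonneg (by linarith), hi]
    rw [habs]
    calc ‖_‖ ≤ ‖(ρ : ℂ) * (if h : (i : ℕ) + 1 < N then u ⟨(i : ℕ) + 1, h⟩ else 0)‖
          + ‖((1 - ρ : ℝ) : ℂ) * (if h : 0 < (i : ℕ) then u ⟨(i : ℕ) - 1, by omega⟩ else 0)‖ :=
        norm_add_le _ _
      _ ≤ ρ * m + (1 - ρ) * (if h : 0 < (i : ℕ) then ‖u ⟨(i : ℕ) - 1, by omega⟩‖ else 0) := by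
        apply add_le_add
        · rw [norm_mul, Complex.norm_real, Real.norm_eq_abs, abs_of_nonneg hρ0.le]
          apply mul_le_mul_of_nonneg_left _ hρ0.le
          split_ifs with h
          · exact hmle _
          · simpa using hmpos.le
        · rw [norm_mul, Complex.norm_real, Real.norm_eq_abs, abs_of_nonneg (by linarith)]
          apply le_of_eq
          congr 1
          split_ifs with h
          · rfl
          · simp
  have claim : ∀ k : ℕ, ∀ i : Fin N, (i : ℕ) = k → ‖u i‖ = m → False := by
    intro k
    induction k with
    | zero =>
      intro i hik him
      have h := local_ineq i him
      rw [dif_neg (by omega)] at h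
      nlinarith [hmle i]
    | succ k ih =>
      intro i hik him
      have h := local_ineq i him
      rw [dif_pos (by omega)] at h
      set j : Fin N := ⟨(i : ℕ) - 1, by omega⟩ with hj
      have hjm : ‖u j‖ = m := by
        have h1 : m ≤ ‖u j‖ := by nlinarith [hmle j]
        exact le_antisymm (hmle j) h1
      exact ih j (by simp [hj]; omega) hjm
  exact claim (imax : ℕ) imax rfl rfl

lemma eig_rho_zero (N : ℕ) (μ : ℂ) (u : Fin N → ℂ) (hu : u ≠ 0)
    (hQu : (Qmat N 0).mulVec u = μ • u) : μ = 0 := by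
  by_contra hμ
  apply hu
  have claim : ∀ k : ℕ, ∀ i : Fin N, (i : ℕ) = k → u i = 0 := by
    intro k
    induction k with
    | zero =>
      intro i hik
      have h := (congrFun hQu i).symm.trans (Q_mulVec N 0 u i)
      rw [dif_neg (show ¬ (0 < (i : ℕ)) by omega)] at h
      have h2 : μ * u i = 0 := by
        simp only [Pi.smul_apply, smul_eq_mul] at h
        push_cast at h
        simpa using h
      rcases mul_eq_zero.mp h2 with h' | h'
      · exact absurd h' hμ
      · exact h'
    | succ k ih =>
      intro i hik
      have h := (congrFun hQu i).symm.trans (Q_mulVec N 0 u i)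
      rw [dif_pos (show 0 < (i : ℕ) by omega)] at h
      rw [ih ⟨(i : ℕ) - 1, by omega⟩ (by simp; omega)] at h
      have h2 : μ * u i = 0 := by
        simp only [Pi.smul_apply, smul_eq_mul] at h
        push_cast at h
        simpa using h
      rcases mul_eq_zero.mp h2 with h' | h'
      · exact absurd h' hμ
      · exact h'
  ext i
  exact claim (i : ℕ) i rfl

lemma eig_rho_one (N : ℕ) (μ : ℂ) (u : Fin N → ℂ) (hu : u ≠ 0)
    (hQu : (Qmat N 1).mulVec u = μ • u) : μ = 0 := by
  by_contra hμ
  apply hu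
  have claim : ∀ k : ℕ, ∀ i : Fin N, (i : ℕ) + k = N - 1 → u i = 0 := by
    intro k
    induction k with
    | zero =>
      intro i hik
      have h := (congrFun hQu i).symm.trans (Q_mulVec N 1 u i)
      rw [dif_neg (show ¬ ((i : ℕ) + 1 < N) by have := i.isLt; omega)] at h
      have h2 : μ * u i = 0 := by
        simp only [Pi.smul_apply, smul_eq_mul] at h
        push_cast at h
        simpa using h
      rcases mul_eq_zero.mp h2 with h' | h'
      · exact absurd h' hμ
      · exact h'
    | succ k ih =>
      intro i hik
      have h := (congrFun hQu i).symm.trans (Q_mulVec N 1 u i)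
      have hlt : (i : ℕ) + 1 < N := by have := i.isLt; omega
      rw [dif_pos hlt] at h
      rw [ih ⟨(i : ℕ) + 1, hlt⟩ (by simp; omega)] at h
      have h2 : μ * u i = 0 := by
        simp only [Pi.smul_apply, smul_eq_mul] at h
        push_cast at h
        simpa using h
      rcases mul_eq_zero.mp h2 with h' | h'
      · exact absurd h' hμ
      · exact h'
  ext i
  exact claim (N - 1 - (i : ℕ)) i (by have := i.isLt; omega)


lemma hurwitz_fwd (f g l : ℝ) (hf : f < 0) (hg : g < 0) (hl : 0 < l) (ν : ℂ)
    (h : ν ^ 2 = ((f : ℂ) + g * ν) * l) : ν.re < 0 := by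
  have hre := congrArg Complex.re h
  have him := congrArg Complex.im h
  simp only [pow_two, Complex.mul_re, Complex.mul_im, Complex.add_re, Complex.add_im,
    Complex.ofReal_re, Complex.ofReal_im, mul_zero, zero_mul, sub_zero, add_zero,
    zero_add] at hre him
  set x := ν.re
  set y := ν.im
  rcases eq_or_ne y 0 with hy | hy
  · rw [hy] at hre
    by_contra hx
    push_neg at hx
    nlinarith [mul_nonneg hx hx, mul_pos (neg_pos.mpr hf) hl,
      mul_nonneg (mul_nonneg (neg_nonneg.mpr hg.le) hx) hl.le]
  · have hx : x = g * l / 2 := by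
      have h2 : (2 * x) * y = (g * l) * y := by nlinarith
      have := mul_right_cancel₀ hy h2
      linarith
    rw [hx]
    have : g * l < 0 := mul_neg_of_neg_of_pos hg hl
    linarith

lemma hurwitz_bwd (f g l : ℝ) (hl : 0 < l)
    (hall : ∀ ν : ℂ, ν ^ 2 = ((f : ℂ) + g * ν) * l → ν.re < 0) : f < 0 ∧ g < 0 := by
  rcases le_or_gt 0 (g ^ 2 * l ^ 2 + 4 * f * l) with hs | hs
  · set r : ℝ := Real.sqrt (g ^ 2 * l ^ 2 + 4 * f * l) with hrdef
    have hr : r ^ 2 = g ^ 2 * l ^ 2 + 4 * f * l := Real.sq_sqrt hs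
    have hrnn : 0 ≤ r := Real.sqrt_nonneg _
    have hrC : (r : ℂ) ^ 2 = (g : ℂ) ^ 2 * l ^ 2 + 4 * f * l := by exact_mod_cast hr
    have h1 : (((g * l + r) / 2 : ℝ) : ℂ) ^ 2
        = ((f : ℂ) + g * (((g * l + r) / 2 : ℝ) : ℂ)) * l := by
      push_cast
      linear_combination (1 / 4 : ℂ) * hrC
    have h2 : (((g * l - r) / 2 : ℝ) : ℂ) ^ 2
        = ((f : ℂ) + g * (((g * l - r) / 2 : ℝ) : ℂ)) * l := by
      push_cast
      linear_combination (1 / 4 : ℂ) * hrC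
    have hn1 : (g * l + r) / 2 < 0 := by simpa using hall _ h1
    have hn2 : (g * l - r) / 2 < 0 := by simpa using hall _ h2
    constructor
    · nlinarith
    · nlinarith
  · have hf : f < 0 := by nlinarith [sq_nonneg (g * l)]
    refine ⟨hf, ?_⟩
    set r : ℝ := Real.sqrt (-(g ^ 2 * l ^ 2 + 4 * f * l)) with hrdef
    have hr : r ^ 2 = -(g ^ 2 * l ^ 2 + 4 * f * l) := Real.sq_sqrt (by linarith)
    have hrC : (r : ℂ) ^ 2 = -((g : ℂ) ^ 2 * l ^ 2 + 4 * f * l) := by exact_mod_cast hr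
    set ν : ℂ := ((g * l / 2 : ℝ) : ℂ) + ((r / 2 : ℝ) : ℂ) * Complex.I with hν
    have hid : ν ^ 2 = ((f : ℂ) + g * ν) * l := by
      rw [hν]
      push_cast
      linear_combination ((r : ℂ) ^ 2 / 4) * Complex.I_sq - (1 / 4 : ℂ) * hrC
    have := hall ν hid
    rw [hν] at this
    simp only [Complex.add_re, Complex.ofReal_re, Complex.mul_re, Complex.I_re,
      Complex.ofReal_im, Complex.I_im, mul_zero, zero_mul, mul_one, sub_zero] at this
    nlinarith [this]

lemma mulVec0 (N : ℕ) (ρ f g : ℝ) (w : Fin N × Fin 2 → ℂ) (i : Fin N) :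
    (((1 : Matrix (Fin N) (Fin N) ℂ) ⊗ₖ (!![0, 1; 0, 0] : Matrix (Fin 2) (Fin 2) ℂ) +
      Pmat N ρ ⊗ₖ (!![0, 0; (f : ℂ), (g : ℂ)] : Matrix (Fin 2) (Fin 2) ℂ)).mulVec w) (i, 0)
      = w (i, 1) := by
  simp [Matrix.mulVec, dotProduct, Fintype.sum_prod_type, Fin.sum_univ_two,
    Matrix.kroneckerMap_apply, Matrix.one_apply]

lemma mulVec1 (N : ℕ) (ρ f g : ℝ) (w : Fin N × Fin 2 → ℂ) (i : Fin N) :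
    (((1 : Matrix (Fin N) (Fin N) ℂ) ⊗ₖ (!![0, 1; 0, 0] : Matrix (Fin 2) (Fin 2) ℂ) +
      Pmat N ρ ⊗ₖ (!![0, 0; (f : ℂ), (g : ℂ)] : Matrix (Fin 2) (Fin 2) ℂ)).mulVec w) (i, 1)
      = f * ((Pmat N ρ).mulVec (fun j => w (j,0))) i
        + g * ((Pmat N ρ).mulVec (fun j => w (j,1))) i := by
  simp only [Matrix.mulVec, dotProduct, Fintype.sum_prod_type, Fin.sum_univ_two,
    Matrix.add_apply, Matrix.kroneckerMap_apply, Matrix.one_apply, Finset.mul_sum]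
  rw [← Finset.sum_add_distrib]
  apply Finset.sum_congr rfl
  intro j _
  simp [Matrix.cons_val_zero, Matrix.cons_val_one]
  ring

lemma specM_iff (N : ℕ) (hN : 1 ≤ N) (ρ f g : ℝ) (ν : ℂ) :
    ν ∈ spectrum ℂ
        ((1 : Matrix (Fin N) (Fin N) ℂ) ⊗ₖ (!![0, 1; 0, 0] : Matrix (Fin 2) (Fin 2) ℂ) +
          Pmat N ρ ⊗ₖ (!![0, 0; (f : ℂ), (g : ℂ)] : Matrix (Fin 2) (Fin 2) ℂ))
      ↔ ∃ μ ∈ spectrum ℂ (Pmat N ρ), ν ^ 2 = ((f : ℂ) + g * ν) * μ := by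
  rw [mem_spec_iff]
  constructor
  · rintro ⟨w, hw, h⟩
    set u : Fin N → ℂ := fun i => w (i, 0) with hu_def
    have h1 : ∀ i, w (i, 1) = ν * u i := by
      intro i
      have := congrFun h (i, 0)
      rw [mulVec0] at this
      simpa using this
    have h2 : ∀ i, ((f : ℂ) + g * ν) * ((Pmat N ρ).mulVec u) i = ν ^ 2 * u i := by
      intro i
      have := congrFun h (i, 1)
      rw [mulVec1] at this
      have hv : (fun j => w (j, 1)) = ν • u := by
        ext j; simp [h1 j]
      rw [hv] at this
      rw [Matrix.mulVec_smul] at this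
      simp only [Pi.smul_apply, smul_eq_mul, h1 i] at this
      ring_nf
      ring_nf at this
      linear_combination this
    have hu : u ≠ 0 := by
      intro h0
      apply hw
      ext ⟨i, b⟩
      fin_cases b
      · exact congrFun h0 i
      · simp [h1 i, congrFun h0 i]
    by_cases hc : ((f : ℂ) + g * ν) = 0
    · obtain ⟨i, hi⟩ := Function.ne_iff.mp hu
      have : ν ^ 2 = 0 := by
        have := h2 i
        rw [hc, zero_mul] at this
        have h0 : ν ^ 2 * u i = 0 := this.symm
        rcases mul_eq_zero.mp h0 with h | h
        · exact h
        · exact absurd h (by simpa using hi)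
      obtain ⟨μ, hμ⟩ := spec_nonempty hN (Pmat N ρ)
      exact ⟨μ, hμ, by rw [this, hc, zero_mul]⟩
    · refine ⟨ν ^ 2 / ((f : ℂ) + g * ν), ?_, by rw [mul_comm]; exact (div_mul_cancel₀ _ hc).symm⟩
      rw [mem_spec_iff]
      refine ⟨u, hu, ?_⟩
      ext i
      have := h2 i
      rw [Pi.smul_apply, smul_eq_mul, div_mul_eq_mul_div, eq_div_iff hc]
      linear_combination this
  · rintro ⟨μ, hμ, hq⟩
    rw [mem_spec_iff] at hμ
    obtain ⟨u, hu, hPu⟩ := hμ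
    refine ⟨fun p => if p.2 = 0 then u p.1 else ν * u p.1, ?_, ?_⟩
    · intro h0
      apply hu
      ext i
      have := congrFun h0 (i, 0)
      simpa using this
    · ext ⟨i, b⟩
      fin_cases b
      · have h0 := mulVec0 N ρ f g (fun p => if p.2 = 0 then u p.1 else ν * u p.1) i
        simpa using h0
      · have h1' := mulVec1 N ρ f g (fun p => if p.2 = 0 then u p.1 else ν * u p.1) i
        rw [show ((⟨1, by omega⟩ : Fin 2)) = 1 from rfl]
        rw [h1']
        have e0 : (fun j => (if (0 : Fin 2) = 0 then u j else ν * u j)) = u := by ext j; simp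
        have e1 : (fun j => (if (1 : Fin 2) = 0 then u j else ν * u j)) = ν • u := by
          ext j; simp
        simp only []
        have hP0 := congrFun hPu i
        have : f * ((Pmat N ρ).mulVec u) i + g * ((Pmat N ρ).mulVec (ν • u)) i = ν * (ν * u i) := by
          rw [Matrix.mulVec_smul]
          simp only [Pi.smul_apply, smul_eq_mul, hP0, Pi.smul_apply, smul_eq_mul]
          linear_combination (-u i) * hq
        simp [e0, e1]
        exact this


lemma specP_all (N : ℕ) (ρ : ℝ) (hρ : ρ ∈ Set.Icc (0 : ℝ) 1) (lam : ℂ)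
    (hlam : lam ∈ spectrum ℂ (Pmat N ρ)) : lam.im = 0 ∧ 0 < lam.re := by
  obtain ⟨u, hu, hPu⟩ := (mem_spec_iff _ _).mp hlam
  have hQu : (Qmat N ρ).mulVec u = (1 - lam) • u := by
    have hP : (Pmat N ρ).mulVec u = u - (Qmat N ρ).mulVec u := by
      rw [Pmat, Matrix.sub_mulVec, Matrix.one_mulVec]
    rw [hP] at hPu
    ext i
    have hi := congrFun hPu i
    simp only [Pi.sub_apply, Pi.smul_apply, smul_eq_mul] at hi ⊢
    linear_combination -hi
  obtain ⟨h0, h1⟩ := hρ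
  rcases eq_or_lt_of_le h0 with h0' | h0'
  · -- ρ = 0
    rw [← h0'] at hQu
    have := eig_rho_zero N (1 - lam) u hu hQu
    have hlam1 : lam = 1 := by linear_combination -this
    rw [hlam1]
    norm_num
  · rcases eq_or_lt_of_le h1 with h1' | h1'
    · -- ρ = 1
      rw [h1'] at hQu
      have := eig_rho_one N (1 - lam) u hu hQu
      have hlam1 : lam = 1 := by linear_combination -this
      rw [hlam1]
      norm_num
    · -- 0 < ρ < 1
      have him := eig_im_zero N ρ h0' h1' (1 - lam) u hu hQu
      have hlim : lam.im = 0 := by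
        simpa using him
      refine ⟨hlim, ?_⟩
      have hcoe : (1 - lam) = (((1 - lam.re : ℝ)) : ℂ) := by
        apply Complex.ext
        · simp
        · simpa using him
      rw [hcoe] at hQu
      have := eig_re_lt_one N ρ h0' h1' (1 - lam.re) u hu hQu
      linarith

theorem stmt_5 (N : ℕ) (hN : 1 ≤ N) (ρ : ℝ) (hρ : ρ ∈ Set.Icc (0 : ℝ) 1) (f g : ℝ) :
    (∀ ν ∈ spectrum ℂ
        ((1 : Matrix (Fin N) (Fin N) ℂ) ⊗ₖ (!![0, 1; 0, 0] : Matrix (Fin 2) (Fin 2) ℂ) +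
          Pmat N ρ ⊗ₖ (!![0, 0; (f : ℂ), (g : ℂ)] : Matrix (Fin 2) (Fin 2) ℂ)),
      ν.re < 0) ↔ (f < 0 ∧ g < 0) := by
  constructor
  · intro hall
    obtain ⟨μ, hμ⟩ := spec_nonempty hN (Pmat N ρ)
    obtain ⟨him, hre⟩ := specP_all N ρ hρ μ hμ
    have hμeq : μ = ((μ.re : ℝ) : ℂ) := Complex.ext rfl (by simp [him])
    apply hurwitz_bwd f g μ.re hre
    intro ν hid
    apply hall ν
    rw [specM_iff N hN ρ f g ν]
    refine ⟨μ, hμ, ?_⟩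
    rw [hμeq]
    exact hid
  · rintro ⟨hf, hg⟩ ν hν
    rw [specM_iff N hN ρ f g ν] at hν
    obtain ⟨μ, hμ, hq⟩ := hν
    obtain ⟨him, hre⟩ := specP_all N ρ hρ μ hμ
    have hμeq : μ = ((μ.re : ℝ) : ℂ) := Complex.ext rfl (by simp [him])
    exact hurwitz_fwd f g μ.re hf hg hre ν (by rw [hμeq] at hq; exact hq)
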